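/- Let T > 0 and let h : [0,T] × ℝ → ℝ be an L¹-Carathéodory function such that h(x,s) > 0 for a.e. x ∈ [0,T] and every s < 0. Then every solution u of u'' + h(x,u) = 0 on [0,T] satisfying either the Neumann boundary conditions or the periodic boundary conditions is non-negative on [0,T], i.e., u(x) ≥ 0 for every x ∈ [0,T]. -/

import Mathlib

open MeasureTheory Set Filter

open Topology

/-- `u` (with derivative `u'`) is a C¹ solution of `u'' + f(x) = 0` on `[0,T]`:
`u'` is absolutely continuous and the equation holds a.e., expressed via the
integral equation `u'(x) = u'(0) − ∫₀ˣ f(t) dt`. -/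
def IsSolOn (T : ℝ) (f : ℝ → ℝ) (u u' : ℝ → ℝ) : Prop :=
  (∀ x ∈ Icc (0:ℝ) T, HasDerivWithinAt u (u' x) (Icc (0:ℝ) T) x) ∧
  ContinuousOn u' (Icc (0:ℝ) T) ∧
  ∀ x ∈ Icc (0:ℝ) T, u' x = u' 0 - ∫ t in (0:ℝ)..x, f t

/-- The equation `u'' + a(x) g(u) = 0` on `[0,T]` has a positive solution
satisfying the Neumann boundary conditions. -/
def PosSolNeumann (T : ℝ) (a g : ℝ → ℝ) : Prop :=
  ∃ u u' : ℝ → ℝ, IsSolOn T (fun t => a t * g (u t)) u u' ∧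
    (∀ x ∈ Icc (0:ℝ) T, 0 < u x) ∧ u' 0 = 0 ∧ u' T = 0

/-- The equation `u'' + a(x) g(u) = 0` on `[0,T]` has a positive solution
satisfying the periodic boundary conditions. -/
def PosSolPeriodic (T : ℝ) (a g : ℝ → ℝ) : Prop :=
  ∃ u u' : ℝ → ℝ, IsSolOn T (fun t => a t * g (u t)) u u' ∧
    (∀ x ∈ Icc (0:ℝ) T, 0 < u x) ∧ u 0 = u T ∧ u' 0 = u' T

/-- `h : [0,T] × ℝ → ℝ` is an `L¹`-Carathéodory function. -/
def L1Caratheodory (T : ℝ) (h : ℝ → ℝ → ℝ) : Prop :=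
  (∀ s : ℝ, Measurable fun x => h x s) ∧
  (∀ᵐ x ∂(volume.restrict (Icc (0:ℝ) T)), Continuous fun s => h x s) ∧
  ∀ ρ : ℝ, 0 < ρ → ∃ γ : ℝ → ℝ, (∀ x, 0 ≤ γ x) ∧
    IntegrableOn γ (Icc (0:ℝ) T) volume ∧
    ∀ᵐ x ∂(volume.restrict (Icc (0:ℝ) T)), ∀ s : ℝ, |s| ≤ ρ → |h x s| ≤ γ x

/-- Maximum principle (i): if `h` is `L¹`-Carathéodory with `h(x,s) > 0` for
a.e. `x` and every `s < 0`, then every Neumann or periodic solution of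
`u'' + h(x,u) = 0` is non-negative on `[0,T]`. -/

lemma aux_tendsto_floor (x : ℝ) :
    Tendsto (fun n : ℕ => ((⌊x * (n + 1)⌋ : ℝ)) / (n + 1)) atTop (𝓝 x) := by
  rw [tendsto_iff_dist_tendsto_zero]
  apply squeeze_zero (fun n => dist_nonneg) (g := fun n : ℕ => 1 / ((n : ℝ) + 1))
  · intro n
    have hn : (0:ℝ) < (n : ℝ) + 1 := by positivity
    rw [Real.dist_eq]
    have he : (⌊x * (n + 1)⌋ : ℝ) / (n + 1) - x = ((⌊x * (n + 1)⌋ : ℝ) - x * (n + 1)) / (n + 1) := by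
      field_simp
    rw [he, abs_div, abs_of_pos hn, div_le_div_iff_of_pos_right hn]
    have h1 := Int.floor_le (x * (n + 1))
    have h2 := Int.sub_one_lt_floor (x * (n + 1))
    rw [abs_le]
    constructor <;> linarith
  · exact tendsto_one_div_add_atTop_nhds_zero_nat

lemma aux_meas (T : ℝ) (h : ℝ → ℝ → ℝ)
    (hm : ∀ s : ℝ, Measurable fun x => h x s)
    (hc : ∀ᵐ x ∂(volume.restrict (Icc (0:ℝ) T)), Continuous fun s => h x s)
    (U : ℝ → ℝ) (hU : Continuous U) :
    AEMeasurable (fun x => h x (U x)) (volume.restrict (Icc (0:ℝ) T)) := by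
  have hFmeas : ∀ n : ℕ, Measurable (fun x : ℝ => h x (U ((⌊x * (n + 1)⌋ : ℝ) / (n + 1)))) := by
    intro n
    have hG : Measurable (fun p : ℝ × ℤ => h p.1 (U ((p.2 : ℝ) / (n + 1)))) :=
      measurable_from_prod_countable_left (fun k : ℤ => hm (U ((k : ℝ) / (n + 1))))
    exact hG.comp (measurable_id.prodMk (measurable_id.mul_const _).floor)
  refine aemeasurable_of_tendsto_metrizable_ae'
    (f := fun (n : ℕ) (x : ℝ) => h x (U ((⌊x * (n + 1)⌋ : ℝ) / (n + 1))))
    (fun n => (hFmeas n).aemeasurable) ?_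
  filter_upwards [hc] with x hx
  have hUt : Tendsto (fun n : ℕ => U ((⌊x * (n + 1)⌋ : ℝ) / (n + 1))) atTop (𝓝 (U x)) :=
    (hU.tendsto x).comp (aux_tendsto_floor x)
  exact (hx.tendsto (U x)).comp hUt

theorem statement_17
    (T : ℝ) (hT : 0 < T)
    (h : ℝ → ℝ → ℝ) (hCar : L1Caratheodory T h)
    (hpos : ∀ᵐ x ∂(volume.restrict (Icc (0:ℝ) T)), ∀ s : ℝ, s < 0 → 0 < h x s)
    (u u' : ℝ → ℝ)
    (hsol : IsSolOn T (fun t => h t (u t)) u u')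
    (hBC : (u' 0 = 0 ∧ u' T = 0) ∨ (u 0 = u T ∧ u' 0 = u' T)) :
    ∀ x ∈ Icc (0:ℝ) T, 0 ≤ u x := by
  obtain ⟨hderiv, hu'cont, hInt⟩ := hsol
  set f : ℝ → ℝ := fun t => h t (u t) with hf_def
  have h0mem : (0:ℝ) ∈ Icc (0:ℝ) T := ⟨le_refl _, hT.le⟩
  have hTmem : T ∈ Icc (0:ℝ) T := ⟨hT.le, le_refl _⟩
  have hucont : ContinuousOn u (Icc (0:ℝ) T) := fun x hx => (hderiv x hx).continuousWithinAt
  -- continuous extension of u to ℝ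
  set U : ℝ → ℝ := fun x => u (max 0 (min x T)) with hU_def
  have hproj : ∀ x : ℝ, max 0 (min x T) ∈ Icc (0:ℝ) T := fun x =>
    ⟨le_max_left _ _, max_le hT.le (min_le_right _ _)⟩
  have hUcont : Continuous U :=
    hucont.comp_continuous (continuous_const.max (continuous_id.min continuous_const)) hproj
  have hUeq : ∀ x ∈ Icc (0:ℝ) T, U x = u x := by
    intro x hx
    simp only [hU_def]
    rw [min_eq_left hx.2, max_eq_right hx.1]
  -- measurability of f on [0,T]
  have hfaem : AEMeasurable f (volume.restrict (Icc (0:ℝ) T)) := by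
    refine (aux_meas T h hCar.1 hCar.2.1 U hUcont).congr ?_
    filter_upwards [ae_restrict_mem measurableSet_Icc] with x hx
    simp only [hf_def]
    rw [hUeq x hx]
  -- integrability of f on [0,T]
  obtain ⟨C, hC⟩ := (isCompact_Icc : IsCompact (Icc (0:ℝ) T)).exists_bound_of_continuousOn hucont
  obtain ⟨γ, hγ0, hγint, hγbd⟩ := hCar.2.2 (max C 0 + 1) (by positivity)
  have hIntf : IntegrableOn f (Icc (0:ℝ) T) volume := by
    refine Integrable.mono' hγint hfaem.aestronglyMeasurable ?_
    filter_upwards [hγbd, ae_restrict_mem measurableSet_Icc] with x hb hx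
    have h1 : |u x| ≤ max C 0 + 1 := by
      have := hC x hx
      rw [Real.norm_eq_abs] at this
      have := le_max_left C 0
      linarith
    simpa [Real.norm_eq_abs] using hb (u x) h1
  have hfint : ∀ a c : ℝ, a ∈ Icc (0:ℝ) T → c ∈ Icc (0:ℝ) T → IntervalIntegrable f volume a c :=
    fun a c ha hc => (hIntf.mono_set (uIcc_subset_Icc ha hc)).intervalIntegrable
  -- relation for u'
  have hu'eq : ∀ x₀ ∈ Icc (0:ℝ) T, ∀ x ∈ Icc (0:ℝ) T, u' x = u' x₀ - ∫ t in x₀..x, f t := by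
    intro x₀ h₀ x hx
    have e1 := hInt x hx
    have e2 := hInt x₀ h₀
    have e3 : (∫ t in (0:ℝ)..x₀, f t) + ∫ t in x₀..x, f t = ∫ t in (0:ℝ)..x, f t :=
      intervalIntegral.integral_add_adjacent_intervals (hfint 0 x₀ h0mem h₀) (hfint x₀ x h₀ hx)
    rw [hf_def] at e1 e2
    rw [e1, e2]
    linarith
  -- a.e. positivity where u < 0
  have hposf : ∀ᵐ x ∂(volume.restrict (Icc (0:ℝ) T)), u x < 0 → 0 < f x :=
    hpos.mono fun x hx hux => hx _ hux
  have hsubpos : ∀ a c : ℝ, Ioc a c ⊆ Icc (0:ℝ) T → (∀ x ∈ Ioc a c, u x < 0) →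
      ∀ᵐ x ∂(volume.restrict (Ioc a c)), 0 < f x := by
    intro a c hsub hneg
    filter_upwards [ae_restrict_of_ae_restrict_of_subset hsub hposf,
      ae_restrict_mem measurableSet_Ioc] with x h1 h2
    exact h1 (hneg x h2)
  -- nonneg integrals
  have hintnn : ∀ a c : ℝ, a ≤ c → Ioc a c ⊆ Icc (0:ℝ) T → (∀ x ∈ Ioc a c, u x < 0) →
      0 ≤ ∫ t in a..c, f t := by
    intro a c hac hsub hneg
    rw [intervalIntegral.integral_of_le hac]
    exact setIntegral_nonneg_of_ae_restrict ((hsubpos a c hsub hneg).mono fun x hx => hx.le)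
  -- strict positivity
  have hintpos : ∀ a c : ℝ, a < c → Ioc a c ⊆ Icc (0:ℝ) T → (∀ x ∈ Ioc a c, u x < 0) →
      0 < ∫ t in a..c, f t := by
    intro a c hac hsub hneg
    rw [intervalIntegral.integral_of_le hac.le]
    have hae := hsubpos a c hsub hneg
    have hnn : 0 ≤ᵐ[volume.restrict (Ioc a c)] f := hae.mono fun x hx => hx.le
    have hint : IntegrableOn f (Ioc a c) volume := hIntf.mono_set hsub
    rw [setIntegral_pos_iff_support_of_nonneg_ae hnn hint]
    have h0 : volume {x | x ∈ Ioc a c ∧ x ∉ Function.support f} = 0 := by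
      rw [ae_restrict_iff' measurableSet_Ioc] at hae
      refine measure_mono_null ?_ (ae_iff.mp hae)
      rintro x ⟨hx1, hx2⟩
      simp only [mem_setOf_eq]
      intro hcon
      rw [Function.notMem_support.mp hx2] at hcon
      exact lt_irrefl 0 (hcon hx1)
    calc (0:ENNReal) < volume (Ioc a c) := by
          rw [Real.volume_Ioc]
          exact ENNReal.ofReal_pos.mpr (by linarith)
      _ ≤ volume (Function.support f ∩ Ioc a c) + volume {x | x ∈ Ioc a c ∧ x ∉ Function.support f} := by
          refine le_trans (measure_mono ?_) (measure_union_le _ _)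
          intro x hx
          by_cases hs : x ∈ Function.support f
          · exact Or.inl ⟨hs, hx⟩
          · exact Or.inr ⟨hx, hs⟩
      _ = volume (Function.support f ∩ Ioc a c) := by rw [h0, add_zero]
  -- FTC
  have hFTC : ∀ a c : ℝ, 0 ≤ a → a ≤ c → c ≤ T → (∫ t in a..c, u' t) = u c - u a := by
    intro a c h0a hac hcT
    have hsub : Icc a c ⊆ Icc (0:ℝ) T := Icc_subset_Icc h0a hcT
    refine intervalIntegral.integral_eq_sub_of_hasDerivAt_of_le hac (hucont.mono hsub) ?_
      ((hu'cont.mono hsub).intervalIntegrable_of_Icc hac)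
    intro x hx
    have hx' : x ∈ Ioo (0:ℝ) T := ⟨lt_of_le_of_lt h0a hx.1, lt_of_lt_of_le hx.2 hcT⟩
    exact (hderiv x (Ioo_subset_Icc_self hx')).hasDerivAt (Icc_mem_nhds hx'.1 hx'.2)
  -- negativity neighborhood
  have hnbhd : ∀ z ∈ Icc (0:ℝ) T, u z < 0 → ∃ δ > 0, ∀ x ∈ Icc (0:ℝ) T, |x - z| ≤ δ → u x < 0 := by
    intro z hz huz
    have hcw : ContinuousWithinAt u (Icc (0:ℝ) T) z := hucont z hz
    have hmem : u ⁻¹' Iio 0 ∈ 𝓝[Icc (0:ℝ) T] z := hcw (Iio_mem_nhds huz)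
    rw [mem_nhdsWithin] at hmem
    obtain ⟨V, hVopen, hzV, hVsub⟩ := hmem
    obtain ⟨δ, hδ, hball⟩ := Metric.isOpen_iff.mp hVopen z hzV
    refine ⟨δ/2, by linarith, fun x hx hxz => ?_⟩
    have hxV : x ∈ V := hball (by rw [Metric.mem_ball, Real.dist_eq]; linarith)
    exact hVsub ⟨hxV, hx⟩
  -- main right-going argument
  have keyR : ∀ z ∈ Icc (0:ℝ) T, z < T → u' z = 0 → u z < 0 →
      IsMinOn u (Icc (0:ℝ) T) z → False := by
    intro z hz hzT hz' huz hmin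
    obtain ⟨δ, hδ, hδneg⟩ := hnbhd z hz huz
    set ε := min δ (T - z) with hε_def
    have hε : 0 < ε := lt_min hδ (by linarith)
    have hεδ : ε ≤ δ := min_le_left _ _
    have hεT : ε ≤ T - z := min_le_right _ _
    set b := z + ε with hb_def
    set x₁ := z + ε/2 with hx₁_def
    have hbT : b ≤ T := by rw [hb_def]; linarith
    have hb_mem : b ∈ Icc (0:ℝ) T := ⟨by have := hz.1; rw [hb_def]; linarith, hbT⟩
    have hx₁_mem : x₁ ∈ Icc (0:ℝ) T := ⟨by have := hz.1; rw [hx₁_def]; linarith,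
      by rw [hx₁_def]; linarith⟩
    have hneg : ∀ x ∈ Icc z b, u x < 0 := by
      intro x hx
      have hx' : x ∈ Icc (0:ℝ) T := ⟨le_trans hz.1 hx.1, le_trans hx.2 hbT⟩
      refine hδneg x hx' ?_
      rw [abs_le]
      have h1 := hx.1
      have h2 := hx.2
      rw [hb_def] at h2
      constructor <;> linarith
    set c₀ := ∫ t in z..x₁, f t with hc₀_def
    have hc₀pos : 0 < c₀ := by
      refine hintpos z x₁ (by rw [hx₁_def]; linarith) ?_ ?_
      · exact fun x hx => ⟨le_trans hz.1 hx.1.le, le_trans hx.2 hx₁_mem.2⟩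
      · intro x hx
        refine hneg x ⟨hx.1.le, ?_⟩
        have := hx.2
        rw [hx₁_def] at this
        rw [hb_def]
        linarith
    have hu'le : ∀ x ∈ Icc x₁ b, u' x ≤ -c₀ := by
      intro x hx
      have hx' : x ∈ Icc (0:ℝ) T := ⟨le_trans hx₁_mem.1 hx.1, le_trans hx.2 hbT⟩
      have e := hu'eq z hz x hx'
      have hsplit : (∫ t in z..x₁, f t) + ∫ t in x₁..x, f t = ∫ t in z..x, f t :=
        intervalIntegral.integral_add_adjacent_intervals (hfint z x₁ hz hx₁_mem)
          (hfint x₁ x hx₁_mem hx')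
      have htail : 0 ≤ ∫ t in x₁..x, f t := by
        refine hintnn x₁ x hx.1 (fun y hy => ⟨le_trans hx₁_mem.1 hy.1.le, le_trans hy.2 hx'.2⟩) ?_
        intro y hy
        refine hneg y ⟨?_, le_trans hy.2 hx.2⟩
        have := hy.1
        rw [hx₁_def] at this
        linarith
      rw [e, hz']
      rw [hc₀_def]
      linarith
    have hu'np : ∀ x ∈ Icc z b, u' x ≤ 0 := by
      intro x hx
      have hx' : x ∈ Icc (0:ℝ) T := ⟨le_trans hz.1 hx.1, le_trans hx.2 hbT⟩
      have e := hu'eq z hz x hx'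
      have hnn : 0 ≤ ∫ t in z..x, f t := by
        refine hintnn z x hx.1 (fun y hy => ⟨le_trans hz.1 hy.1.le, le_trans hy.2 hx'.2⟩) ?_
        exact fun y hy => hneg y ⟨hy.1.le, le_trans hy.2 hx.2⟩
      rw [e, hz']
      linarith
    have hzx₁ : z ≤ x₁ := by rw [hx₁_def]; linarith
    have hx₁b : x₁ ≤ b := by rw [hx₁_def, hb_def]; linarith
    have h1 : (∫ t in z..x₁, u' t) ≤ 0 := by
      have hint1 := ContinuousOn.intervalIntegrable_of_Icc (μ := volume) hzx₁ (hu'cont.mono (Icc_subset_Icc hz.1 hx₁_mem.2))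
      calc (∫ t in z..x₁, u' t) ≤ ∫ _ in z..x₁, (0:ℝ) :=
            intervalIntegral.integral_mono_on hzx₁ hint1 intervalIntegrable_const
              (fun x hx => hu'np x ⟨hx.1, le_trans hx.2 hx₁b⟩)
        _ = 0 := by simp
    have h2 : (∫ t in x₁..b, u' t) ≤ (b - x₁) * (-c₀) := by
      have hint1 := ContinuousOn.intervalIntegrable_of_Icc (μ := volume) hx₁b (hu'cont.mono (Icc_subset_Icc hx₁_mem.1 hbT))
      calc (∫ t in x₁..b, u' t) ≤ ∫ _ in x₁..b, (-c₀) :=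
            intervalIntegral.integral_mono_on hx₁b hint1 intervalIntegrable_const
              (fun x hx => hu'le x hx)
        _ = (b - x₁) * (-c₀) := by
            rw [intervalIntegral.integral_const, smul_eq_mul]
    have e1 := hFTC z x₁ hz.1 hzx₁ hx₁_mem.2
    have e2 := hFTC x₁ b hx₁_mem.1 hx₁b hbT
    have hbx₁ : b - x₁ = ε/2 := by rw [hb_def, hx₁_def]; ring
    have hprod : 0 < (b - x₁) * c₀ := mul_pos (by rw [hbx₁]; linarith) hc₀pos
    have hub : u b < u z := by nlinarith [hprod]
    exact absurd (isMinOn_iff.mp hmin b hb_mem) (not_le.mpr hub)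
  -- left-going argument at T
  have keyL : u' T = 0 → u T < 0 → IsMinOn u (Icc (0:ℝ) T) T → False := by
    intro hT' huT hmin
    obtain ⟨δ, hδ, hδneg⟩ := hnbhd T hTmem huT
    set ε := min δ T with hε_def
    have hε : 0 < ε := lt_min hδ hT
    have hεδ : ε ≤ δ := min_le_left _ _
    have hεT : ε ≤ T := min_le_right _ _
    set a := T - ε with ha_def
    set x₁ := T - ε/2 with hx₁_def
    have ha_mem : a ∈ Icc (0:ℝ) T := ⟨by rw [ha_def]; linarith, by rw [ha_def]; linarith⟩
    have hx₁_mem : x₁ ∈ Icc (0:ℝ) T := ⟨by rw [hx₁_def]; linarith, by rw [hx₁_def]; linarith⟩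
    have hneg : ∀ x ∈ Icc a T, u x < 0 := by
      intro x hx
      have hx' : x ∈ Icc (0:ℝ) T := ⟨le_trans ha_mem.1 hx.1, hx.2⟩
      refine hδneg x hx' ?_
      rw [abs_le]
      have h1 := hx.1
      have h2 := hx.2
      rw [ha_def] at h1
      constructor <;> linarith
    set c₀ := ∫ t in x₁..T, f t with hc₀_def
    have hc₀pos : 0 < c₀ := by
      refine hintpos x₁ T (by rw [hx₁_def]; linarith) ?_ ?_
      · exact fun x hx => ⟨le_trans hx₁_mem.1 hx.1.le, hx.2⟩
      · intro x hx
        refine hneg x ⟨?_, hx.2⟩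
        have := hx.1
        rw [hx₁_def] at this
        rw [ha_def]
        linarith
    have hu'ge : ∀ x ∈ Icc a x₁, c₀ ≤ u' x := by
      intro x hx
      have hx' : x ∈ Icc (0:ℝ) T := ⟨le_trans ha_mem.1 hx.1, le_trans hx.2 hx₁_mem.2⟩
      have e := hu'eq T hTmem x hx'
      have hsym : (∫ t in T..x, f t) = - ∫ t in x..T, f t := intervalIntegral.integral_symm x T
      have hsplit : (∫ t in x..x₁, f t) + ∫ t in x₁..T, f t = ∫ t in x..T, f t :=
        intervalIntegral.integral_add_adjacent_intervals (hfint x x₁ hx' hx₁_mem)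
          (hfint x₁ T hx₁_mem hTmem)
      have hhead : 0 ≤ ∫ t in x..x₁, f t := by
        refine hintnn x x₁ hx.2 (fun y hy => ⟨le_trans hx'.1 hy.1.le, le_trans hy.2 hx₁_mem.2⟩) ?_
        intro y hy
        refine hneg y ⟨le_trans hx.1 hy.1.le, le_trans hy.2 hx₁_mem.2⟩
      rw [e, hT', hsym, hc₀_def]
      linarith
    have hu'nn : ∀ x ∈ Icc a T, 0 ≤ u' x := by
      intro x hx
      have hx' : x ∈ Icc (0:ℝ) T := ⟨le_trans ha_mem.1 hx.1, hx.2⟩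
      have e := hu'eq T hTmem x hx'
      have hsym : (∫ t in T..x, f t) = - ∫ t in x..T, f t := intervalIntegral.integral_symm x T
      have hnn : 0 ≤ ∫ t in x..T, f t := by
        refine hintnn x T hx.2 (fun y hy => ⟨le_trans hx'.1 hy.1.le, hy.2⟩) ?_
        exact fun y hy => hneg y ⟨le_trans hx.1 hy.1.le, hy.2⟩
      rw [e, hT', hsym]
      linarith
    have hax₁ : a ≤ x₁ := by rw [ha_def, hx₁_def]; linarith
    have hx₁T : x₁ ≤ T := hx₁_mem.2
    have h1 : (x₁ - a) * c₀ ≤ ∫ t in a..x₁, u' t := by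
      have hint1 := ContinuousOn.intervalIntegrable_of_Icc (μ := volume) hax₁ (hu'cont.mono (Icc_subset_Icc ha_mem.1 hx₁_mem.2))
      calc (x₁ - a) * c₀ = ∫ _ in a..x₁, c₀ := by
            rw [intervalIntegral.integral_const, smul_eq_mul]
        _ ≤ ∫ t in a..x₁, u' t :=
            intervalIntegral.integral_mono_on hax₁ intervalIntegrable_const hint1
              (fun x hx => hu'ge x hx)
    have h2 : (0:ℝ) ≤ ∫ t in x₁..T, u' t := by
      have hint1 := ContinuousOn.intervalIntegrable_of_Icc (μ := volume) hx₁T (hu'cont.mono (Icc_subset_Icc hx₁_mem.1 le_rfl))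
      calc (0:ℝ) = ∫ _ in x₁..T, (0:ℝ) := by simp
        _ ≤ ∫ t in x₁..T, u' t :=
            intervalIntegral.integral_mono_on hx₁T intervalIntegrable_const hint1
              (fun x hx => hu'nn x ⟨le_trans hax₁ hx.1, hx.2⟩)
    have e1 := hFTC a x₁ ha_mem.1 hax₁ hx₁_mem.2
    have e2 := hFTC x₁ T hx₁_mem.1 hx₁T le_rfl
    have hx₁a : x₁ - a = ε/2 := by rw [ha_def, hx₁_def]; ring
    have hprod : 0 < (x₁ - a) * c₀ := mul_pos (by rw [hx₁a]; linarith) hc₀pos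
    have hub : u a < u T := by nlinarith [hprod]
    exact absurd (isMinOn_iff.mp hmin a ha_mem) (not_le.mpr hub)
  -- endpoint derivative signs
  have hslope0 : IsMinOn u (Icc (0:ℝ) T) 0 → 0 ≤ u' 0 := by
    intro hmin
    have hd := hderiv 0 h0mem
    rw [hasDerivWithinAt_iff_tendsto_slope] at hd
    have hne : (𝓝[Icc (0:ℝ) T \ {0}] (0:ℝ)).NeBot := by
      have h1 : (𝓝[Ioc (0:ℝ) T] (0:ℝ)).NeBot := left_nhdsWithin_Ioc_neBot hT
      exact h1.mono (nhdsWithin_mono _ (fun x hx => ⟨⟨hx.1.le, hx.2⟩, ne_of_gt hx.1⟩))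
    refine ge_of_tendsto hd ?_
    filter_upwards [self_mem_nhdsWithin] with x hx
    have hx0 : 0 < x := lt_of_le_of_ne hx.1.1 (Ne.symm hx.2)
    have hle : u 0 ≤ u x := isMinOn_iff.mp hmin x hx.1
    rw [slope_def_field]
    exact div_nonneg (by linarith) (by linarith)
  have hslopeT : IsMinOn u (Icc (0:ℝ) T) T → u' T ≤ 0 := by
    intro hmin
    have hd := hderiv T hTmem
    rw [hasDerivWithinAt_iff_tendsto_slope] at hd
    have hne : (𝓝[Icc (0:ℝ) T \ {T}] T).NeBot := by
      have h1 : (𝓝[Ioo (0:ℝ) T] T).NeBot := right_nhdsWithin_Ioo_neBot hT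
      exact h1.mono (nhdsWithin_mono _ (fun x hx => ⟨⟨hx.1.le, hx.2.le⟩, ne_of_lt hx.2⟩))
    refine le_of_tendsto hd ?_
    filter_upwards [self_mem_nhdsWithin] with x hx
    have hxT : x < T := lt_of_le_of_ne hx.1.2 hx.2
    have hle : u T ≤ u x := isMinOn_iff.mp hmin x hx.1
    rw [slope_def_field]
    exact div_nonpos_of_nonneg_of_nonpos (by linarith) (by linarith)
  -- interior critical point
  have hinter : ∀ z ∈ Ioo (0:ℝ) T, IsMinOn u (Icc (0:ℝ) T) z → u' z = 0 := by
    intro z hz hmin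
    have hd : HasDerivAt u (u' z) z :=
      (hderiv z (Ioo_subset_Icc_self hz)).hasDerivAt (Icc_mem_nhds hz.1 hz.2)
    exact (hmin.isLocalMin (Icc_mem_nhds hz.1 hz.2)).hasDerivAt_eq_zero hd
  -- conclusion
  by_contra hcon
  push_neg at hcon
  obtain ⟨x, hx, hux⟩ := hcon
  obtain ⟨z, hz, hmin⟩ := isCompact_Icc.exists_isMinOn (nonempty_Icc.mpr hT.le) hucont
  have huz : u z < 0 := lt_of_le_of_lt (isMinOn_iff.mp hmin x hx) hux
  rcases eq_or_lt_of_le hz.1 with h0z | h0z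
  · -- z = 0
    have hz0 : z = 0 := h0z.symm
    subst hz0
    have hd0 : u' 0 = 0 := by
      rcases hBC with ⟨hN0, _⟩ | ⟨hP, hP'⟩
      · exact hN0
      · have hminT : IsMinOn u (Icc (0:ℝ) T) T := isMinOn_iff.mpr fun y hy => by
          rw [← hP]; exact isMinOn_iff.mp hmin y hy
        have h1 := hslope0 hmin
        have h2 := hslopeT hminT
        linarith
    exact keyR 0 h0mem hT hd0 huz hmin
  · rcases eq_or_lt_of_le hz.2 with hzT | hzT
    · -- z = T
      have huT : u T < 0 := hzT ▸ huz
      have hminT : IsMinOn u (Icc (0:ℝ) T) T := hzT ▸ hmin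
      rcases hBC with ⟨_, hNT⟩ | ⟨hP, hP'⟩
      · exact keyL hNT huT hminT
      · have hmin0 : IsMinOn u (Icc (0:ℝ) T) 0 := isMinOn_iff.mpr fun y hy => by
          rw [hP]; exact isMinOn_iff.mp hminT y hy
        have hd0 : u' 0 = 0 := by
          have h1 := hslope0 hmin0
          have h2 := hslopeT hminT
          linarith
        have hu0 : u 0 < 0 := by rw [hP]; exact huT
        exact keyR 0 h0mem hT hd0 hu0 hmin0
    · exact keyR z hz hzT (hinter z ⟨h0z, hzT⟩ hmin) huz hmin
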